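/- Let g > 2 be an integer and let W be the group with presentation ⟨A, B, C | A² = B^{4g} = C⁴ = ABC = C²B^{2g} = 1⟩. Then the element C²A of W has order 2. -/

import Mathlib

/-- Relators of the Wiman type II group
⟨A, B, C | A² = B^{4g} = C⁴ = ABC = C²B^{2g} = 1⟩, with generators
A, B, C represented by `FreeGroup.of 0`, `FreeGroup.of 1`, `FreeGroup.of 2`. -/
def wimanRels (g : ℕ) : Set (FreeGroup (Fin 3)) :=
  {FreeGroup.of 0 ^ 2, FreeGroup.of 1 ^ (4 * g), FreeGroup.of 2 ^ 4,
   FreeGroup.of 0 * FreeGroup.of 1 * FreeGroup.of 2,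
   FreeGroup.of 2 ^ 2 * FreeGroup.of 1 ^ (2 * g)}

/-- In any group, the Wiman relations imply `(c²a)² = 1`. -/
lemma wiman_sq_eq_one {G : Type*} [Group G] (g : ℕ) (hg : 1 ≤ g) (a b c : G)
    (ha : a ^ 2 = 1) (hb : b ^ (4 * g) = 1) (hc4 : c ^ 4 = 1)
    (habc : a * b * c = 1) (hcb : c ^ 2 * b ^ (2 * g) = 1) :
    (c ^ 2 * a) ^ 2 = 1 := by
  obtain ⟨k, rfl⟩ : ∃ k, g = k + 1 := ⟨g - 1, by omega⟩
  have ha' : a⁻¹ = a := by rw [inv_eq_iff_mul_eq_one, ← sq, ha]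
  have hc2 : c ^ 2 = (b ^ (2 * (k + 1)))⁻¹ := eq_inv_of_mul_eq_one_left hcb
  have hc : (a * b)⁻¹ = c := inv_eq_iff_mul_eq_one.mpr habc
  have hcinv : c⁻¹ = a * b := by rw [← hc, inv_inv]
  have h1 : (a * b) ^ 2 = b ^ (2 * (k + 1)) := by
    rw [← hcinv, inv_pow, hc2, inv_inv]
  have e1 : 2 * (k + 1) = 2 * k + 1 + 1 := by omega
  rw [e1, pow_succ b (2 * k + 1), sq, ← mul_assoc] at h1
  have haba : a * b * a = b ^ (2 * k + 1) := mul_right_cancel h1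
  have hconj : a * b * a⁻¹ = b ^ (2 * k + 1) := by rw [ha']; exact haba
  have habg : a * b ^ (2 * (k + 1)) * a⁻¹ = b ^ (2 * (k + 1)) := by
    rw [← conj_pow, hconj, ← pow_mul]
    have e2 : (2 * k + 1) * (2 * (k + 1)) = 4 * (k + 1) * k + 2 * (k + 1) := by ring
    rw [e2, pow_add, pow_mul, hb, one_pow, one_mul]
  have hx : a * c ^ 2 * a⁻¹ = c ^ 2 := by
    have hr : a * (b ^ (2 * (k + 1)))⁻¹ * a⁻¹ = (a * b ^ (2 * (k + 1)) * a⁻¹)⁻¹ := by group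
    rw [hc2, hr, habg]
  have : (c ^ 2 * a) ^ 2 = c ^ 2 * (a * c ^ 2 * a⁻¹) * a ^ 2 := by rw [sq]; group
  rw [this, hx, ha, mul_one, ← pow_add]
  exact hc4

/-- The Wiman relations hold in the presented group. -/
lemma wiman_rel_one (g : ℕ) {r : FreeGroup (Fin 3)} (hr : r ∈ wimanRels g) :
    PresentedGroup.mk (wimanRels g) r = 1 :=
  (QuotientGroup.eq_one_iff r).mpr (Subgroup.subset_normalClosure hr)

theorem stmt_10 (g : ℕ) (hg : 2 < g)
    (A C : PresentedGroup (wimanRels g))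
    (hA : A = PresentedGroup.of 0) (hC : C = PresentedGroup.of 2) :
    orderOf (C ^ 2 * A) = 2 := by
  subst hA hC
  set a : PresentedGroup (wimanRels g) := PresentedGroup.of 0 with ha_def
  set b : PresentedGroup (wimanRels g) := PresentedGroup.of 1 with hb_def
  set c : PresentedGroup (wimanRels g) := PresentedGroup.of 2 with hc_def
  have ha : a ^ 2 = 1 := by
    have := wiman_rel_one g (r := FreeGroup.of 0 ^ 2) (by simp [wimanRels])
    simpa [ha_def, hb_def, hc_def, PresentedGroup.of] using this
  have hb : b ^ (4 * g) = 1 := by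
    have := wiman_rel_one g (r := FreeGroup.of 1 ^ (4 * g)) (by simp [wimanRels])
    simpa [ha_def, hb_def, hc_def, PresentedGroup.of] using this
  have hc4 : c ^ 4 = 1 := by
    have := wiman_rel_one g (r := FreeGroup.of 2 ^ 4) (by simp [wimanRels])
    simpa [ha_def, hb_def, hc_def, PresentedGroup.of] using this
  have habc : a * b * c = 1 := by
    have := wiman_rel_one g
      (r := FreeGroup.of 0 * FreeGroup.of 1 * FreeGroup.of 2) (by simp [wimanRels])
    simpa [ha_def, hb_def, hc_def, PresentedGroup.of] using this
  have hcb : c ^ 2 * b ^ (2 * g) = 1 := by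
    have := wiman_rel_one g
      (r := FreeGroup.of 2 ^ 2 * FreeGroup.of 1 ^ (2 * g)) (by simp [wimanRels])
    simpa [ha_def, hb_def, hc_def, PresentedGroup.of] using this
  have hsq : (c ^ 2 * a) ^ 2 = 1 :=
    wiman_sq_eq_one g (by omega) a b c ha hb hc4 habc hcb
  -- nontriviality via a homomorphism to `Multiplicative (ZMod 4)`
  set f : Fin 3 → Multiplicative (ZMod 4) :=
    ![Multiplicative.ofAdd 2, 1, Multiplicative.ofAdd 2] with hf_def
  have hrels : ∀ r ∈ wimanRels g, FreeGroup.lift f r = 1 := by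
    intro r hr
    simp only [wimanRels, Set.mem_insert_iff, Set.mem_singleton_iff] at hr
    rcases hr with rfl | rfl | rfl | rfl | rfl <;>
      simp [hf_def, Matrix.cons_val_zero, Matrix.cons_val_one] <;> decide
  set φ := PresentedGroup.toGroup hrels with hφ_def
  have hne : c ^ 2 * a ≠ 1 := by
    intro h
    have : φ (c ^ 2 * a) = 1 := by rw [h, map_one]
    rw [map_mul, map_pow, ha_def, hc_def, PresentedGroup.toGroup.of,
      PresentedGroup.toGroup.of] at this
    revert this
    decide
  exact orderOf_eq_prime hsq hne
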